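/- Generalized advantage estimation as an exponentially-weighted average of k-step advantage estimators: let γ ∈ [0,1], λ ∈ [0,1), and let (r_t)_{t∈ℕ} and (f_t)_{t∈ℕ} be bounded real sequences. Define the TD residuals δ_t := r_t + γ f_{t+1} − f_t and the k-step advantage estimators A^{(k)}_t := (Σ_{l=0}^{k−1} γ^l r_{t+l}) + γ^k f_{t+k} − f_t for k ≥ 1. Then for every t ∈ ℕ, the series Σ_{k=1}^{∞} λ^{k−1} A^{(k)}_t and Σ_{l=0}^{∞} (γλ)^l δ_{t+l} both converge absolutely, and (1 − λ) Σ_{k=1}^{∞} λ^{k−1} A^{(k)}_t = Σ_{l=0}^{∞} (γλ)^l δ_{t+l}. -/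
import Mathlib


open scoped BigOperators

/-- Generalized advantage estimation as an exponentially-weighted average of k-step
advantage estimators: with TD residuals `δ_t = r_t + γ f_{t+1} − f_t` and k-step advantage
estimators `A^{(k)}_t = (Σ_{l<k} γ^l r_{t+l}) + γ^k f_{t+k} − f_t` (`k ≥ 1`), for bounded
sequences `r`, `f` and `γ ∈ [0,1]`, `λ ∈ [0,1)`, both series
`Σ_{k=1}^∞ λ^{k−1} A^{(k)}_t` and `Σ_{l=0}^∞ (γλ)^l δ_{t+l}` converge absolutely and
`(1 − λ) Σ_{k=1}^∞ λ^{k−1} A^{(k)}_t = Σ_{l=0}^∞ (γλ)^l δ_{t+l}`. -/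
theorem gae_exponentially_weighted_average
    (γ lam : ℝ) (hγ : 0 ≤ γ ∧ γ ≤ 1) (hlam : 0 ≤ lam ∧ lam < 1)
    (r f : ℕ → ℝ)
    (hr : ∃ M : ℝ, ∀ t, |r t| ≤ M)
    (hf : ∃ M : ℝ, ∀ t, |f t| ≤ M)
    (δ : ℕ → ℝ)
    (hδ : ∀ t, δ t = r t + γ * f (t + 1) - f t)
    (Ak : ℕ → ℕ → ℝ)
    (hAk : ∀ k t, Ak (k + 1) t =
      (∑ l ∈ Finset.range (k + 1), γ ^ l * r (t + l)) + γ ^ (k + 1) * f (t + (k + 1)) - f t)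
    (t : ℕ) :
    Summable (fun k : ℕ => |lam ^ k * Ak (k + 1) t|) ∧
    Summable (fun l : ℕ => |(γ * lam) ^ l * δ (t + l)|) ∧
    (1 - lam) * (∑' k : ℕ, lam ^ k * Ak (k + 1) t) = ∑' l : ℕ, (γ * lam) ^ l * δ (t + l) := by
  obtain ⟨hγ0, hγ1⟩ := hγ
  obtain ⟨hl0, hl1⟩ := hlam
  obtain ⟨Mr, hMr⟩ := hr
  obtain ⟨Mf, hMf⟩ := hf
  set C := Mr + 2 * Mf with hC
  -- bound on δ
  have hδb : ∀ s, |δ s| ≤ C := by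
    intro s
    rw [hδ]
    have h1 : |r s + γ * f (s + 1) - f s| ≤ |r s| + |γ * f (s + 1)| + |f s| := by
      calc |r s + γ * f (s + 1) - f s| ≤ |r s + γ * f (s + 1)| + |f s| := abs_sub _ _
        _ ≤ |r s| + |γ * f (s + 1)| + |f s| := by
              have := abs_add_le (r s) (γ * f (s + 1)); linarith
    have h2 : |γ * f (s + 1)| ≤ Mf := by
      rw [abs_mul, abs_of_nonneg hγ0]
      have hfb := hMf (s + 1)
      have hfb0 : (0:ℝ) ≤ |f (s + 1)| := abs_nonneg _
      nlinarith
    have := hMr s; have := hMf s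
    simp only [hC]; linarith
  have hC0 : 0 ≤ C := le_trans (abs_nonneg _) (hδb 0)
  -- Ak in terms of δ
  have hAδ : ∀ k, Ak (k + 1) t = ∑ l ∈ Finset.range (k + 1), γ ^ l * δ (t + l) := by
    intro k
    induction k with
    | zero => simp [hAk, hδ]
    | succ n ih =>
      have h1 := hAk (n + 1) t
      rw [Finset.sum_range_succ] at h1
      have h2 := hAk n t
      have e1 : t + (n + 1) + 1 = t + (n + 1 + 1) := by omega
      rw [Finset.sum_range_succ, ← ih, h1, h2, hδ (t + (n + 1)), e1]
      ring
  -- summability 1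
  have hS1 : Summable (fun k : ℕ => |lam ^ k * Ak (k + 1) t|) := by
    have hmaj : Summable (fun k : ℕ => C * ((k : ℝ) + 1) * lam ^ k) := by
      have h1 : Summable (fun k : ℕ => (k : ℝ) * lam ^ k) := by
        have := summable_pow_mul_geometric_of_norm_lt_one (R := ℝ) 1
          (by rwa [Real.norm_eq_abs, abs_of_nonneg hl0])
        simpa using this
      have h2 : Summable (fun k : ℕ => lam ^ k) :=
        summable_geometric_of_lt_one hl0 hl1
      have := (h1.add h2).mul_left C
      refine this.congr ?_
      intro k; ring
    refine Summable.of_nonneg_of_le (fun k => abs_nonneg _) ?_ hmaj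
    intro k
    rw [abs_mul, abs_pow, abs_of_nonneg hl0, hAδ]
    have hAb : |∑ l ∈ Finset.range (k + 1), γ ^ l * δ (t + l)| ≤ C * ((k : ℝ) + 1) := by
      calc |∑ l ∈ Finset.range (k + 1), γ ^ l * δ (t + l)|
          ≤ ∑ l ∈ Finset.range (k + 1), |γ ^ l * δ (t + l)| := Finset.abs_sum_le_sum_abs _ _
        _ ≤ ∑ l ∈ Finset.range (k + 1), C := by
            refine Finset.sum_le_sum fun l _ => ?_
            rw [abs_mul, abs_pow, abs_of_nonneg hγ0]
            have hγp : γ ^ l ≤ 1 := pow_le_one₀ hγ0 hγ1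
            have hγp0 : (0:ℝ) ≤ γ ^ l := pow_nonneg hγ0 l
            have hd := hδb (t + l)
            have hd0 : (0:ℝ) ≤ |δ (t + l)| := abs_nonneg _
            nlinarith
        _ = C * ((k : ℝ) + 1) := by
            rw [Finset.sum_const, Finset.card_range]; push_cast; ring
    have hlp : (0:ℝ) ≤ lam ^ k := pow_nonneg hl0 k
    calc lam ^ k * |∑ l ∈ Finset.range (k + 1), γ ^ l * δ (t + l)|
          ≤ lam ^ k * (C * ((k:ℝ) + 1)) := mul_le_mul_of_nonneg_left hAb hlp
      _ = C * ((k:ℝ) + 1) * lam ^ k := by ring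
  -- summability 2
  have hγl0 : 0 ≤ γ * lam := mul_nonneg hγ0 hl0
  have hγl1 : γ * lam < 1 := lt_of_le_of_lt (by nlinarith) hl1
  have hS2 : Summable (fun l : ℕ => |(γ * lam) ^ l * δ (t + l)|) := by
    refine Summable.of_nonneg_of_le (fun l => abs_nonneg _) ?_
      ((summable_geometric_of_lt_one hγl0 hγl1).mul_right C)
    intro l
    rw [abs_mul, abs_pow, abs_of_nonneg hγl0]
    exact mul_le_mul_of_nonneg_left (hδb (t + l)) (pow_nonneg hγl0 l)
  refine ⟨hS1, hS2, ?_⟩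
  have hsumA : Summable (fun k : ℕ => lam ^ k * Ak (k + 1) t) := hS1.of_abs
  have hsumD : Summable (fun l : ℕ => (γ * lam) ^ l * δ (t + l)) := hS2.of_abs
  have hshift : Summable (fun k : ℕ => lam ^ (k + 1) * Ak (k + 1 + 1) t) := by
    have := (summable_nat_add_iff 1).mpr hsumA
    simpa using this
  have hshift2 : Summable (fun k : ℕ => lam ^ (k + 1) * Ak (k + 1) t) :=
    (hsumA.mul_left lam).congr (by intro k; ring)
  set T := ∑' k : ℕ, lam ^ k * Ak (k + 1) t with hT
  have hTsplit : T = lam ^ 0 * Ak 1 t + ∑' k : ℕ, lam ^ (k + 1) * Ak (k + 1 + 1) t :=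
    Summable.tsum_eq_zero_add hsumA
  have hlamT : lam * T = ∑' k : ℕ, lam ^ (k + 1) * Ak (k + 1) t := by
    rw [hT, ← tsum_mul_left]
    exact tsum_congr fun k => by ring
  have hdiff : ∀ k : ℕ, lam ^ (k + 1) * Ak (k + 1 + 1) t - lam ^ (k + 1) * Ak (k + 1) t
      = (γ * lam) ^ (k + 1) * δ (t + (k + 1)) := by
    intro k
    rw [hAδ (k + 1), hAδ k, Finset.sum_range_succ]
    rw [mul_pow]
    ring
  have key : (1 - lam) * T = lam ^ 0 * Ak 1 t + ∑' k : ℕ, (γ * lam) ^ (k + 1) * δ (t + (k + 1)) := by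
    have : (1 - lam) * T = T - lam * T := by ring
    rw [this, hlamT, hTsplit]
    rw [add_sub_assoc, ← Summable.tsum_sub hshift hshift2]
    congr 1
    exact tsum_congr hdiff
  have hRsplit : (∑' l : ℕ, (γ * lam) ^ l * δ (t + l))
      = (γ * lam) ^ 0 * δ (t + 0) + ∑' l : ℕ, (γ * lam) ^ (l + 1) * δ (t + (l + 1)) :=
    Summable.tsum_eq_zero_add hsumD
  rw [key, hRsplit]
  congr 1
  simp [hAk, hδ]
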